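/- Let e be a constant vector in ℝ^{n+1} and Σ a hypersurface with unit normal ν. For the tangent vector field Z = ⟨ν,e⟩ x^T − ⟨x,ν⟩ e^T on Σ (where x^T, e^T denote tangential projections of the position vector x and of e), the tangential divergence satisfies div_Σ(Z) = n⟨ν,e⟩. -/

import Mathlib

theorem sum_q (n : ℕ) (ν v : EuclideanSpace ℝ (Fin (n+1))) (hν : (inner ℝ ν ν : ℝ) = 1) :
    ∑ i, (inner ℝ v (EuclideanSpace.single i (1:ℝ) - ν i • ν) : ℝ) •
      (EuclideanSpace.single i (1:ℝ) - ν i • ν)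
      = v - (inner ℝ v ν : ℝ) • ν := by
  have hin : ∀ w u : EuclideanSpace ℝ (Fin (n+1)), (inner ℝ w u : ℝ) = ∑ j, w j * u j := by
    intro w u; simp [PiLp.inner_apply]; exact Finset.sum_congr rfl fun _ _ => mul_comm _ _
  set c : ℝ := (inner ℝ v ν : ℝ) with hc
  have hvν : c = ∑ j, v j * ν j := hin v ν
  have hνν : (∑ j, ν j * ν j) = 1 := by rw [← hin ν ν]; exact hν
  have hq : ∀ i, (inner ℝ v (EuclideanSpace.single i (1:ℝ) - ν i • ν) : ℝ)
      = v i - ν i * c := by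
    intro i
    rw [inner_sub_right, real_inner_smul_right, EuclideanSpace.inner_single_right]
    simp [hc, mul_comm]
  ext j
  rw [WithLp.ofLp_sum, Finset.sum_apply j Finset.univ _]
  simp only [PiLp.smul_apply, PiLp.sub_apply, smul_eq_mul, hq, EuclideanSpace.single_apply]
  have step : ∀ i, (v i - ν i * c) * ((if j = i then (1:ℝ) else 0) - ν i * ν j)
      = (if j = i then v i - ν i * c else 0)
        + ((-(ν j)) * (v i * ν i) + (c * ν j) * (ν i * ν i)) := by
    intro i; split <;> ring
  rw [Finset.sum_congr rfl fun i _ => step i, Finset.sum_add_distrib,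
    Finset.sum_add_distrib, ← Finset.mul_sum, ← Finset.mul_sum, ← hvν, hνν,
    Finset.sum_ite_eq]
  simp; ring

theorem key (n : ℕ)
    (A : EuclideanSpace ℝ (Fin (n+1)) →L[ℝ] EuclideanSpace ℝ (Fin (n+1)))
    (ν e x : EuclideanSpace ℝ (Fin (n+1)))
    (hν : (inner ℝ ν ν : ℝ) = 1)
    (hA : ∀ u, (inner ℝ (A u) ν : ℝ) = 0)
    (hsym : ∀ u v : EuclideanSpace ℝ (Fin (n+1)),
      (inner ℝ u ν : ℝ) = 0 → (inner ℝ v ν : ℝ) = 0 →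
      (inner ℝ (A u) v : ℝ) = (inner ℝ (A v) u : ℝ)) :
    ∑ i, (inner ℝ ((inner ℝ (A (EuclideanSpace.single i (1:ℝ) - ν i • ν)) e : ℝ) • x
        + (inner ℝ ν e : ℝ) • (EuclideanSpace.single i (1:ℝ) - ν i • ν)
        - ((inner ℝ (EuclideanSpace.single i (1:ℝ) - ν i • ν) ν : ℝ)
            + (inner ℝ x (A (EuclideanSpace.single i (1:ℝ) - ν i • ν)) : ℝ)) • e)
        (EuclideanSpace.single i (1:ℝ) - ν i • ν) : ℝ)
      = n * (inner ℝ ν e : ℝ) := by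
  set q : Fin (n+1) → EuclideanSpace ℝ (Fin (n+1)) :=
    fun i => EuclideanSpace.single i (1:ℝ) - ν i • ν with hqdef
  have hsngl : ∀ i, (inner ℝ (EuclideanSpace.single i (1:ℝ)) ν : ℝ) = ν i := by
    intro i; simp [EuclideanSpace.inner_single_left]
  have hqν : ∀ i, (inner ℝ (q i) ν : ℝ) = 0 := by
    intro i; rw [hqdef]; simp only [inner_sub_left, real_inner_smul_left, hsngl, hν]; ring
  -- summand simplification
  have hsummand : ∀ i,
      (inner ℝ ((inner ℝ (A (q i)) e : ℝ) • x + (inner ℝ ν e : ℝ) • q i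
        - ((inner ℝ (q i) ν : ℝ) + (inner ℝ x (A (q i)) : ℝ)) • e) (q i) : ℝ)
      = (inner ℝ (A (q i)) e : ℝ) * (inner ℝ x (q i) : ℝ)
        + (inner ℝ ν e : ℝ) * (inner ℝ (q i) (q i) : ℝ)
        - (inner ℝ x (A (q i)) : ℝ) * (inner ℝ e (q i) : ℝ) := by
    intro i
    rw [inner_sub_left, inner_add_left, real_inner_smul_left, real_inner_smul_left,
      real_inner_smul_left, hqν i]
    ring
  rw [Finset.sum_congr rfl fun i _ => hsummand i]
  rw [Finset.sum_sub_distrib, Finset.sum_add_distrib]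
  -- Sum1
  have hPx := sum_q n ν x hν
  have hPe := sum_q n ν e hν
  set Px : EuclideanSpace ℝ (Fin (n+1)) := x - (inner ℝ x ν : ℝ) • ν with hPxdef
  set Pe : EuclideanSpace ℝ (Fin (n+1)) := e - (inner ℝ e ν : ℝ) • ν with hPedef
  have hSum1 : (∑ i, (inner ℝ (A (q i)) e : ℝ) * (inner ℝ x (q i) : ℝ))
      = (inner ℝ (A Px) e : ℝ) := by
    rw [← hPx, map_sum, sum_inner]
    refine Finset.sum_congr rfl fun i _ => ?_
    rw [map_smul, real_inner_smul_left]; ring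
  have hSum3 : (∑ i, (inner ℝ x (A (q i)) : ℝ) * (inner ℝ e (q i) : ℝ))
      = (inner ℝ x (A Pe) : ℝ) := by
    rw [← hPe, map_sum, inner_sum]
    refine Finset.sum_congr rfl fun i _ => ?_
    rw [map_smul, real_inner_smul_right]; ring
  -- Sum2
  have hin : ∀ w u : EuclideanSpace ℝ (Fin (n+1)), (inner ℝ w u : ℝ) = ∑ j, w j * u j := by
    intro w u; simp [PiLp.inner_apply]; exact Finset.sum_congr rfl fun _ _ => mul_comm _ _
  have hνν : (∑ j, ν j * ν j) = 1 := by rw [← hin ν ν]; exact hν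
  have hSum2 : (∑ i, (inner ℝ (q i) (q i) : ℝ)) = n := by
    have hsr : ∀ i : Fin (n+1), (inner ℝ ν (EuclideanSpace.single i (1:ℝ)) : ℝ) = ν i := by
      intro i; simp [EuclideanSpace.inner_single_right]
    have hss : ∀ i : Fin (n+1), (inner ℝ (EuclideanSpace.single i (1:ℝ))
        (EuclideanSpace.single i (1:ℝ)) : ℝ) = 1 := by
      intro i; simp [EuclideanSpace.inner_single_left]
    have hqq : ∀ i, (inner ℝ (q i) (q i) : ℝ) = 1 - ν i * ν i := by
      intro i
      rw [hqdef]
      simp only [inner_sub_left, inner_sub_right, real_inner_smul_left, real_inner_smul_right,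
        hsngl, hsr, hss, hν]
      ring
    rw [Finset.sum_congr rfl fun i _ => hqq i, Finset.sum_sub_distrib, hνν]
    simp [Finset.card_univ]
  rw [hSum1, hSum3, ← Finset.mul_sum, hSum2]
  -- cancellation via symmetry
  have hPxν : (inner ℝ Px ν : ℝ) = 0 := by
    rw [hPxdef, inner_sub_left, real_inner_smul_left, hν]; ring
  have hPeν : (inner ℝ Pe ν : ℝ) = 0 := by
    rw [hPedef, inner_sub_left, real_inner_smul_left, hν]; ring
  have he : e = Pe + (inner ℝ e ν : ℝ) • ν := by rw [hPedef]; abel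
  have hx : x = Px + (inner ℝ x ν : ℝ) • ν := by rw [hPxdef]; abel
  have h1 : (inner ℝ (A Px) e : ℝ) = (inner ℝ (A Px) Pe : ℝ) := by
    conv_lhs => rw [he]
    rw [inner_add_right, real_inner_smul_right, hA]; ring
  have h3 : (inner ℝ x (A Pe) : ℝ) = (inner ℝ (A Pe) Px : ℝ) := by
    have h0 : (inner ℝ ν (A Pe) : ℝ) = 0 := by rw [real_inner_comm (A Pe) ν]; exact hA Pe
    conv_lhs => rw [hx]
    rw [inner_add_left, real_inner_smul_left, h0, real_inner_comm (A Pe) Px]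
    ring
  rw [h1, h3, hsym Px Pe hPxν hPeν]
  ring
/-- For a hypersurface `Σ ⊂ ℝ^{n+1}` with unit normal (Gauss map) `ν` and a constant
vector `e`, the tangent field `Z = ⟨ν,e⟩ x^T − ⟨x,ν⟩ e^T` has tangential divergence
`div_Σ Z = n ⟨ν,e⟩`.  Here `v^T = v − ⟨v,ν⟩ν`, and the tangential divergence at `x`
is the trace of `P ∘ DZ ∘ P`, with `P` the orthogonal projection onto the tangent
space `ν(x)^⊥`; symmetry of the shape operator (Weingarten) is assumed. -/
theorem stmt1 (n : ℕ) (e : EuclideanSpace ℝ (Fin (n + 1)))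
    (ν : EuclideanSpace ℝ (Fin (n + 1)) → EuclideanSpace ℝ (Fin (n + 1)))
    (x : EuclideanSpace ℝ (Fin (n + 1)))
    (hν : ∀ y, ‖ν y‖ = 1)
    (hdiff : DifferentiableAt ℝ ν x)
    -- symmetry of the second fundamental form `h(X,Y) = ⟨∇̄_X ν, Y⟩` on tangent vectors
    (hsym : ∀ u v : EuclideanSpace ℝ (Fin (n + 1)),
      (inner ℝ u (ν x) : ℝ) = 0 → (inner ℝ v (ν x) : ℝ) = 0 →
      (inner ℝ ((fderiv ℝ ν x) u) v : ℝ) = (inner ℝ ((fderiv ℝ ν x) v) u : ℝ))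
    -- the tangential projection at `x`
    (P : EuclideanSpace ℝ (Fin (n + 1)) → EuclideanSpace ℝ (Fin (n + 1)))
    (hP : ∀ v, P v = v - (inner ℝ v (ν x) : ℝ) • ν x)
    -- the vector field `Z = ⟨ν,e⟩ x^T − ⟨x,ν⟩ e^T`
    (Z : EuclideanSpace ℝ (Fin (n + 1)) → EuclideanSpace ℝ (Fin (n + 1)))
    (hZ : ∀ y, Z y = (inner ℝ (ν y) e : ℝ) • (y - (inner ℝ y (ν y) : ℝ) • ν y)
      - (inner ℝ y (ν y) : ℝ) • (e - (inner ℝ e (ν y) : ℝ) • ν y)) :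
    (∑ i, (inner ℝ ((fderiv ℝ Z x) (P (EuclideanSpace.single i 1)))
        (P (EuclideanSpace.single i 1)) : ℝ))
      = n * (inner ℝ (ν x) e : ℝ) := by
  set A := fderiv ℝ ν x with hAdef
  have hAd : HasFDerivAt ν A x := hdiff.hasFDerivAt
  have hν1 : (inner ℝ (ν x) (ν x) : ℝ) = 1 := by
    rw [real_inner_self_eq_norm_mul_norm, hν x]; ring
  -- simplify Z
  have hZeq : Z = fun y => (inner ℝ (ν y) e : ℝ) • y - (inner ℝ y (ν y) : ℝ) • e := by
    funext y
    rw [hZ y, smul_sub, smul_sub, smul_smul, smul_smul]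
    have hcomm : (inner ℝ (ν y) e : ℝ) * (inner ℝ y (ν y) : ℝ)
        = (inner ℝ y (ν y) : ℝ) * (inner ℝ e (ν y) : ℝ) := by
      rw [real_inner_comm e (ν y)]; ring
    rw [hcomm]; abel
  -- the derivative
  have hD := ((hAd.inner ℝ (hasFDerivAt_const e x)).smul (hasFDerivAt_id x)).sub
    (((hasFDerivAt_id x).inner ℝ hAd).smul_const e)
  have hfd : fderiv ℝ Z x = ((inner ℝ (ν x) e : ℝ) • ContinuousLinearMap.id ℝ _
        + ((fderivInnerCLM ℝ (ν x, e)).comp (A.prod 0)).smulRight x)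
      - ((fderivInnerCLM ℝ (x, ν x)).comp
          ((ContinuousLinearMap.id ℝ _).prod A)).smulRight e := by
    rw [hZeq]
    exact hD.fderiv
  have hDapp : ∀ u, (fderiv ℝ Z x) u
      = (inner ℝ (A u) e : ℝ) • x + (inner ℝ (ν x) e : ℝ) • u
        - ((inner ℝ u (ν x) : ℝ) + (inner ℝ x (A u) : ℝ)) • e := by
    intro u
    rw [hfd]
    simp only [ContinuousLinearMap.sub_apply, ContinuousLinearMap.add_apply,
      ContinuousLinearMap.smul_apply, ContinuousLinearMap.smulRight_apply,
      ContinuousLinearMap.comp_apply, ContinuousLinearMap.prod_apply,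
      ContinuousLinearMap.coe_id', id_eq, ContinuousLinearMap.zero_apply,
      fderivInnerCLM_apply, inner_zero_right, add_zero, zero_add]
    module
  -- orthogonality of A u and ν x
  have horth : ∀ u, (inner ℝ (A u) (ν x) : ℝ) = 0 := by
    have h1 : HasFDerivAt (fun y => (inner ℝ (ν y) (ν y) : ℝ))
        ((fderivInnerCLM ℝ (ν x, ν x)).comp (A.prod A)) x := hAd.inner ℝ hAd
    have h2 : (fun y => (inner ℝ (ν y) (ν y) : ℝ)) = fun _ => (1:ℝ) := by
      funext y; rw [real_inner_self_eq_norm_mul_norm, hν y]; ring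
    rw [h2] at h1
    have h3 := (hasFDerivAt_const (1:ℝ) x).unique h1
    intro u
    have h4 := congrArg (fun L : EuclideanSpace ℝ (Fin (n+1)) →L[ℝ] ℝ => L u) h3
    simp only [ContinuousLinearMap.zero_apply, ContinuousLinearMap.comp_apply,
      ContinuousLinearMap.prod_apply, fderivInnerCLM_apply] at h4
    rw [real_inner_comm (A u) (ν x)] at h4
    linarith [h4]
  -- rewrite projections
  have hPq : ∀ i, P (EuclideanSpace.single i (1:ℝ))
      = EuclideanSpace.single i (1:ℝ) - ν x i • ν x := by
    intro i
    rw [hP]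
    congr 1
    rw [EuclideanSpace.inner_single_left]
    simp
  have := key n A (ν x) e x hν1 horth hsym
  calc (∑ i, (inner ℝ ((fderiv ℝ Z x) (P (EuclideanSpace.single i 1)))
        (P (EuclideanSpace.single i 1)) : ℝ))
      = ∑ i, (inner ℝ ((inner ℝ (A (EuclideanSpace.single i (1:ℝ) - ν x i • ν x)) e : ℝ) • x
          + (inner ℝ (ν x) e : ℝ) • (EuclideanSpace.single i (1:ℝ) - ν x i • ν x)
          - ((inner ℝ (EuclideanSpace.single i (1:ℝ) - ν x i • ν x) (ν x) : ℝ)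
              + (inner ℝ x (A (EuclideanSpace.single i (1:ℝ) - ν x i • ν x)) : ℝ)) • e)
          (EuclideanSpace.single i (1:ℝ) - ν x i • ν x) : ℝ) := by
        refine Finset.sum_congr rfl fun i _ => ?_
        rw [hPq i, hDapp]
    _ = n * (inner ℝ (ν x) e : ℝ) := this
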